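/- Let G₁ and G₂ be graphs of maximum degree at most 2 on a common vertex set, and suppose each edge e of G₁ ∪ G₂ has a list L(e) of at least 3 colours. Then there is an edge-colouring φ of G₁ ∪ G₂ with φ(e) ∈ L(e) for all e, whose restriction to G₁ is a proper edge-colouring of G₁ and whose restriction to G₂ is a proper edge-colouring of G₂. -/

import Mathlib

section Greedy
variable {α : Type*} (conf : α → α → Prop) [DecidableRel conf] (L : α → Finset ℕ)

/-- Pick a colour of `Le` avoiding `F`, if possible. -/
noncomputable def pickColor (Le F : Finset ℕ) : ℕ :=
  if h : (Le \ F).Nonempty then h.choose else 0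

lemma pickColor_spec {Le F : Finset ℕ} (h : F.card < Le.card) :
    pickColor Le F ∈ Le ∧ pickColor Le F ∉ F := by
  have hne : (Le \ F).Nonempty := by
    rw [Finset.sdiff_nonempty]
    intro hsub
    exact absurd (Finset.card_le_card hsub) (by omega)
  rw [pickColor, dif_pos hne]
  simpa using Finset.mem_sdiff.mp hne.choose_spec

/-- Greedy colouring of a list; the head is coloured avoiding colours of later
conflicting elements. -/
noncomputable def greedy [DecidableEq α] : List α → α → ℕ
  | [] => fun _ => 0
  | e :: t => fun x =>
      if x = e then
        pickColor (L e) ((t.filter (fun f => decide (conf e f))).map (greedy t)).toFinset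
      else greedy t x

lemma greedy_eq_of_suffix [DecidableEq α] : ∀ {l s : List α}, l.Nodup → s <:+ l → ∀ f ∈ s,
    greedy conf L l f = greedy conf L s f := by
  intro l
  induction l with
  | nil => intro s _ hs f hf; rw [List.suffix_nil.mp hs] at hf; simp at hf
  | cons a r ih =>
    intro s hn hs f hf
    rcases List.suffix_cons_iff.mp hs with h | h
    · subst h; rfl
    · have hfr : f ∈ r := h.subset hf
      have hfa : f ≠ a := fun hh => (List.nodup_cons.mp hn).1 (hh ▸ hfr)
      rw [show greedy conf L (a :: r) f = greedy conf L r f by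
        simp [greedy, if_neg hfa]]
      exact ih (List.nodup_cons.mp hn).2 h f hf

lemma greedy_spec [DecidableEq α] {l : List α} (hn : l.Nodup)
    (H : ∀ e t, e :: t <:+ l → (t.filter (fun f => decide (conf e f))).length < (L e).card)
    {e t} (het : e :: t <:+ l) :
    greedy conf L l e ∈ L e ∧
      ∀ f ∈ t, conf e f → greedy conf L l e ≠ greedy conf L l f := by
  have htl : t <:+ l := ((t.suffix_cons e).trans het)
  have he : greedy conf L l e = greedy conf L (e :: t) e :=
    greedy_eq_of_suffix conf L hn het e (by simp)
  set F := ((t.filter (fun f => decide (conf e f))).map (greedy conf L t)).toFinset with hF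
  have hcard : F.card < (L e).card := by
    calc F.card ≤ ((t.filter (fun f => decide (conf e f))).map (greedy conf L t)).length :=
          List.toFinset_card_le _
      _ = (t.filter (fun f => decide (conf e f))).length := by rw [List.length_map]
      _ < (L e).card := H e t het
  have hpick := pickColor_spec hcard
  have hee : greedy conf L l e = pickColor (L e) F := by
    rw [he]; simp [greedy]; rfl
  constructor
  · rw [hee]; exact hpick.1
  · intro f hf hconf heq
    apply hpick.2
    rw [← hee, heq, greedy_eq_of_suffix conf L hn htl f hf]
    rw [hF]
    apply List.mem_toFinset.mpr
    exact List.mem_map.mpr ⟨f, List.mem_filter.mpr ⟨hf, by simpa using hconf⟩, rfl⟩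

/-- Two distinct members of a list: one occurs with the other in its tail. -/
lemma exists_order {l : List α} (hn : l.Nodup) {e f : α} (he : e ∈ l) (hf : f ∈ l)
    (hef : e ≠ f) :
    (∃ t, e :: t <:+ l ∧ f ∈ t) ∨ (∃ t, f :: t <:+ l ∧ e ∈ t) := by
  induction l with
  | nil => simp at he
  | cons a r ih =>
    rcases List.mem_cons.mp he with h | h
    · subst h
      exact Or.inl ⟨r, List.suffix_refl _, (List.mem_cons.mp hf).resolve_left (Ne.symm hef)⟩
    · rcases List.mem_cons.mp hf with h2 | h2
      · subst h2
        exact Or.inr ⟨r, List.suffix_refl _, h⟩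
      · rcases ih (List.nodup_cons.mp hn).2 h h2 with ⟨t, ht, hft⟩ | ⟨t, ht, hft⟩
        · exact Or.inl ⟨t, ht.trans (r.suffix_cons a), hft⟩
        · exact Or.inr ⟨t, ht.trans (r.suffix_cons a), hft⟩

lemma filter_length_le [DecidableEq α] {l : List α} (hn : l.Nodup) {P : α → Bool}
    {S : Finset α} (h : ∀ f ∈ l, P f → f ∈ S) : (l.filter P).length ≤ S.card := by
  have hnd : (l.filter P).Nodup := hn.filter _
  rw [← List.toFinset_card_of_nodup hnd]
  apply Finset.card_le_card
  intro x hx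
  have := List.mem_filter.mp (List.mem_toFinset.mp hx)
  exact h x this.1 this.2

end Greedy

/-- In a graph of maximum degree ≤ 2, each edge meets at most 2 other edges. -/
lemma edge_nbrs_card_le {V : Type*} [Fintype V] [DecidableEq V] (G : SimpleGraph V)
    [DecidableRel G.Adj] (hd : ∀ v : V, G.degree v ≤ 2) {e : Sym2 V}
    (he : e ∈ G.edgeSet) :
    ({f ∈ G.edgeFinset | f ≠ e ∧ ∃ w, w ∈ e ∧ w ∈ f} : Finset (Sym2 V)).card ≤ 2 := by
  induction e with
  | _ u v =>
  have hsub : ({f ∈ G.edgeFinset | f ≠ s(u, v) ∧ ∃ w, w ∈ s(u, v) ∧ w ∈ f} : Finset (Sym2 V))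
      ⊆ (G.incidenceFinset u \ {s(u, v)}) ∪ (G.incidenceFinset v \ {s(u, v)}) := by
    intro f hf
    rw [Finset.mem_filter] at hf
    obtain ⟨hfe, hne, w, hwe, hwf⟩ := hf
    have hfe' : f ∈ G.edgeSet := SimpleGraph.mem_edgeFinset.mp hfe
    rcases Sym2.mem_iff.mp hwe with h | h <;> subst h
    · exact Finset.mem_union_left _ (Finset.mem_sdiff.mpr
        ⟨(by rw [SimpleGraph.mem_incidenceFinset]; exact ⟨hfe', hwf⟩), by simpa using hne⟩)
    · exact Finset.mem_union_right _ (Finset.mem_sdiff.mpr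
        ⟨(by rw [SimpleGraph.mem_incidenceFinset]; exact ⟨hfe', hwf⟩), by simpa using hne⟩)
  have hu : s(u, v) ∈ G.incidenceFinset u := by
    rw [SimpleGraph.mem_incidenceFinset]; exact ⟨he, by simp⟩
  have hv : s(u, v) ∈ G.incidenceFinset v := by
    rw [SimpleGraph.mem_incidenceFinset]; exact ⟨he, by simp⟩
  have du : (G.incidenceFinset u).card = G.degree u := G.card_incidenceFinset_eq_degree u
  have dv : (G.incidenceFinset v).card = G.degree v := G.card_incidenceFinset_eq_degree v
  have c1 : (G.incidenceFinset u \ {s(u, v)}).card ≤ 1 := by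
    rw [Finset.card_sdiff_of_subset (Finset.singleton_subset_iff.mpr hu)]
    have := hd u
    simp only [Finset.card_singleton]
    omega
  have c2 : (G.incidenceFinset v \ {s(u, v)}).card ≤ 1 := by
    rw [Finset.card_sdiff_of_subset (Finset.singleton_subset_iff.mpr hv)]
    have := hd v
    simp only [Finset.card_singleton]
    omega
  calc _ ≤ _ := Finset.card_le_card hsub
    _ ≤ _ := Finset.card_union_le _ _
    _ ≤ 2 := by omega

/-- An edge-colouring is proper for a simple graph `G` if distinct edges of `G`
sharing a vertex receive distinct colours. -/
def IsProperEdgeColoring' {V : Type*} (G : SimpleGraph V)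
    (c : Sym2 V → ℕ) : Prop :=
  ∀ e ∈ G.edgeSet, ∀ f ∈ G.edgeSet, e ≠ f → (∃ v, v ∈ e ∧ v ∈ f) → c e ≠ c f

/-- If G₁, G₂ have maximum degree at most 2 and every edge of G₁ ∪ G₂ has a
list of at least 3 colours, then there is a colouring from the lists that is
simultaneously a proper edge-colouring of G₁ and of G₂. -/
theorem stmt_12 {V : Type*} [Fintype V] [DecidableEq V]
    (G₁ G₂ : SimpleGraph V)
    [DecidableRel G₁.Adj] [DecidableRel G₂.Adj]
    (hd₁ : ∀ v : V, G₁.degree v ≤ 2) (hd₂ : ∀ v : V, G₂.degree v ≤ 2)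
    (L : Sym2 V → Finset ℕ)
    (hL : ∀ e ∈ (G₁ ⊔ G₂).edgeSet, 3 ≤ (L e).card) :
    ∃ φ : Sym2 V → ℕ,
      (∀ e ∈ (G₁ ⊔ G₂).edgeSet, φ e ∈ L e) ∧
      IsProperEdgeColoring' G₁ φ ∧ IsProperEdgeColoring' G₂ φ := by
  classical
  set conf : Sym2 V → Sym2 V → Prop := fun e f =>
    e ≠ f ∧ (∃ v, v ∈ e ∧ v ∈ f) ∧
      ((e ∈ G₁.edgeSet ∧ f ∈ G₁.edgeSet) ∨ (e ∈ G₂.edgeSet ∧ f ∈ G₂.edgeSet)) with hcf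
  set interL : List (Sym2 V) := (G₁ ⊓ G₂).edgeFinset.toList with hinterL
  set restL : List (Sym2 V) :=
    ((G₁ ⊔ G₂).edgeFinset \ (G₁ ⊓ G₂).edgeFinset).toList with hrestL
  set l : List (Sym2 V) := restL ++ interL with hl
  have hnodup : l.Nodup := by
    rw [hl, List.nodup_append]
    refine ⟨Finset.nodup_toList _, Finset.nodup_toList _, ?_⟩
    intro a ha b hb
    rw [hrestL, Finset.mem_toList, Finset.mem_sdiff] at ha
    rw [hinterL, Finset.mem_toList] at hb
    intro h; subst h; exact ha.2 hb
  have hmem : ∀ e ∈ (G₁ ⊔ G₂).edgeSet, e ∈ l := by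
    intro e he
    rw [hl, List.mem_append, hrestL, hinterL, Finset.mem_toList, Finset.mem_toList,
      Finset.mem_sdiff]
    by_cases h : e ∈ (G₁ ⊓ G₂).edgeFinset
    · exact Or.inr h
    · exact Or.inl ⟨SimpleGraph.mem_edgeFinset.mpr he, h⟩
  have hmeml : ∀ f ∈ l, f ∈ (G₁ ⊔ G₂).edgeSet := by
    intro f hf
    rw [hl, List.mem_append, hrestL, hinterL, Finset.mem_toList, Finset.mem_toList,
      Finset.mem_sdiff] at hf
    rcases hf with h | h
    · exact SimpleGraph.mem_edgeFinset.mp h.1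
    · have := SimpleGraph.mem_edgeFinset.mp h
      rw [SimpleGraph.edgeSet_inf] at this
      rw [SimpleGraph.edgeSet_sup]
      exact Or.inl this.1
  have key : ∀ (G : SimpleGraph V) (_ : DecidableRel G.Adj), (∀ v, G.degree v ≤ 2) →
      ∀ e ∈ G.edgeSet, ∀ t : List (Sym2 V), t.Nodup →
      (∀ f ∈ t, conf e f → f ∈ G.edgeSet) →
      (t.filter (fun f => decide (conf e f))).length ≤ 2 := by
    intro G _ hd e he t hnt hG
    calc (t.filter (fun f => decide (conf e f))).length
        ≤ ({f ∈ G.edgeFinset | f ≠ e ∧ ∃ w, w ∈ e ∧ w ∈ f} : Finset (Sym2 V)).card := by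
          apply filter_length_le hnt
          intro f hf hPf
          have hc : conf e f := of_decide_eq_true hPf
          obtain ⟨hne, ⟨v, hv1, hv2⟩, -⟩ := id hc
          exact Finset.mem_filter.mpr ⟨SimpleGraph.mem_edgeFinset.mpr (hG f hf hc),
            Ne.symm hne, v, hv1, hv2⟩
      _ ≤ 2 := edge_nbrs_card_le G hd he
  have H : ∀ e t, e :: t <:+ l →
      (t.filter (fun f => decide (conf e f))).length < (L e).card := by
    intro e t het
    have hel : e ∈ l := het.subset List.mem_cons_self
    have heu : e ∈ (G₁ ⊔ G₂).edgeSet := hmeml e hel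
    have h3 : 3 ≤ (L e).card := hL e heu
    have hnt : t.Nodup := (List.Sublist.nodup ((t.suffix_cons e).trans het).sublist hnodup)
    have hbound : (t.filter (fun f => decide (conf e f))).length ≤ 2 := by
      by_cases hei : e ∈ (G₁ ⊓ G₂).edgeSet
      · have hei' : e ∈ G₁.edgeSet ∧ e ∈ G₂.edgeSet := by
          rwa [SimpleGraph.edgeSet_inf] at hei
        have hts : t ⊆ interL := by
          have hsufI : interL <:+ l := List.suffix_append restL interL
          rcases List.suffix_or_suffix_of_suffix het hsufI with h | h
          · exact ((t.suffix_cons e).trans h).subset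
          · rcases List.suffix_cons_iff.mp h with h2 | h2
            · exact fun x hx => h2 ▸ List.mem_cons_of_mem e hx
            · exfalso
              have heI : e ∈ interL := by
                rw [hinterL, Finset.mem_toList]; exact SimpleGraph.mem_edgeFinset.mpr hei
              have het' : e ∈ t := h2.subset heI
              have hnn := (List.Sublist.nodup het.sublist hnodup)
              exact (List.nodup_cons.mp hnn).1 het'
        apply key G₁ inferInstance hd₁ e hei'.1 t hnt
        intro f hf _
        have : f ∈ (G₁ ⊓ G₂).edgeFinset := by
          rw [← Finset.mem_toList, ← hinterL]; exact hts hf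
        have := SimpleGraph.mem_edgeFinset.mp this
        rw [SimpleGraph.edgeSet_inf] at this
        exact this.1
      · rw [SimpleGraph.edgeSet_sup] at heu
        rw [SimpleGraph.edgeSet_inf] at hei
        rcases heu with he1 | he2
        · have hnot2 : e ∉ G₂.edgeSet := fun h => hei ⟨he1, h⟩
          apply key G₁ inferInstance hd₁ e he1 t hnt
          intro f _ hc
          rcases hc.2.2 with h | h
          · exact h.2
          · exact absurd h.1 hnot2
        · have hnot1 : e ∉ G₁.edgeSet := fun h => hei ⟨h, he2⟩
          apply key G₂ inferInstance hd₂ e he2 t hnt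
          intro f _ hc
          rcases hc.2.2 with h | h
          · exact absurd h.1 hnot1
          · exact h.2
    omega
  refine ⟨greedy conf L l, ?_, ?_, ?_⟩
  · intro e he
    obtain ⟨s, t, hst⟩ := List.mem_iff_append.mp (hmem e he)
    exact (greedy_spec conf L hnodup H (t := t) ⟨s, hst.symm⟩).1
  · intro e he f hf hne hshare
    have hce : conf e f := ⟨hne, hshare, Or.inl ⟨he, hf⟩⟩
    have hcf : conf f e := ⟨hne.symm, by obtain ⟨v, h1, h2⟩ := hshare; exact ⟨v, h2, h1⟩,
      Or.inl ⟨hf, he⟩⟩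
    have hel : e ∈ l := hmem e (by rw [SimpleGraph.edgeSet_sup]; exact Or.inl he)
    have hfl : f ∈ l := hmem f (by rw [SimpleGraph.edgeSet_sup]; exact Or.inl hf)
    rcases exists_order hnodup hel hfl hne with ⟨t, ht, hft⟩ | ⟨t, ht, het⟩
    · exact (greedy_spec conf L hnodup H ht).2 f hft hce
    · exact ((greedy_spec conf L hnodup H ht).2 e het hcf).symm
  · intro e he f hf hne hshare
    have hce : conf e f := ⟨hne, hshare, Or.inr ⟨he, hf⟩⟩
    have hcf : conf f e := ⟨hne.symm, by obtain ⟨v, h1, h2⟩ := hshare; exact ⟨v, h2, h1⟩,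
      Or.inr ⟨hf, he⟩⟩
    have hel : e ∈ l := hmem e (by rw [SimpleGraph.edgeSet_sup]; exact Or.inr he)
    have hfl : f ∈ l := hmem f (by rw [SimpleGraph.edgeSet_sup]; exact Or.inr hf)
    rcases exists_order hnodup hel hfl hne with ⟨t, ht, hft⟩ | ⟨t, ht, het⟩
    · exact (greedy_spec conf L hnodup H ht).2 f hft hce
    · exact ((greedy_spec conf L hnodup H ht).2 e het hcf).symm
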